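/- Let a ≥ 3 be an integer. In the bounded homotopy category K^b(ℤ-proj) of complexes of finitely generated free abelian groups, consider the objects B = (ℤ → ℤ², degrees 0 and 1, differential the column (−a³, a²)), B' = (ℤ → ℤ, degrees 0 and 1, differential a²), C = (ℤ → ℤ, degrees 0 and 1, differential a²), C' = ℤ concentrated in degree 0, and the morphisms (given by chain maps) g : B → C with degree-0 component a and degree-1 component the row (−1, 0); b : B → B' with degree-0 component 1 and degree-1 component the row (0, 1); g' : B' → C' with degree-0 component a; and c : C → C' with degree-0 component 1 + a. Then this square commutes in K^b(ℤ-proj) (i.e. c∘g and g'∘b are homotopic), but it is NOT homotopy cartesian: there exists no morphism δ : C' → B[1] such that the triangle B → B' ⊕ C → C' → B[1], with first map of components (b, g) and second map of components (g', −c), is distinguished. -/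

import Mathlib

open CategoryTheory Limits Pretriangulated

namespace KbFree

/-- The free `ℤ`-module of rank `k`, as an object of `ModuleCat ℤ`. -/
abbrev V (k : ℕ) : ModuleCat ℤ := ModuleCat.of ℤ (Fin k → ℤ)

/-- The morphism `V k ⟶ V l` given by an `l × k` integer matrix. -/
abbrev mt {k l : ℕ} (A : Matrix (Fin l) (Fin k) ℤ) : V k ⟶ V l := ModuleCat.ofHom A.mulVecLin

lemma mt_comp {k l m : ℕ} (A : Matrix (Fin l) (Fin k) ℤ) (B : Matrix (Fin m) (Fin l) ℤ) :
    mt A ≫ mt B = mt (B * A) := by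
  ext1; exact (Matrix.mulVecLin_mul B A).symm

lemma mt_zero {k l : ℕ} : mt (0 : Matrix (Fin l) (Fin k) ℤ) = 0 := by
  ext1; exact Matrix.mulVecLin_zero

lemma mt_add {k l : ℕ} (A B : Matrix (Fin l) (Fin k) ℤ) : mt (A + B) = mt A + mt B := by
  ext1; exact Matrix.mulVecLin_add A B


lemma mat_eq_of_cols0 {k : ℕ} (A B : Matrix (Fin k) (Fin 0) ℤ) : A = B := by
  funext i j; exact j.elim0

lemma mat_eq_of_rows0 {k : ℕ} (A B : Matrix (Fin 0) (Fin k) ℤ) : A = B := by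
  funext i j; exact i.elim0

lemma homs_eq_of_src {k l : ℕ} (hk : k = 0) (f g : V k ⟶ V l) : f = g := by
  subst hk
  ext1
  apply LinearMap.ext
  intro x
  rw [Subsingleton.elim x 0, map_zero, map_zero]

lemma homs_eq_of_tgt {k l : ℕ} (hl : l = 0) (f g : V k ⟶ V l) : f = g := by
  subst hl
  ext1
  apply LinearMap.ext
  intro x
  apply Subsingleton.elim

/-- Case analysis on integers: `0`, `1`, `2`, other nonnegative, negative. -/
theorem int_cases3 {P : ℤ → Prop} (h0 : P 0) (h1 : P 1) (h2 : P 2)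
    (ho : ∀ m : ℕ, P (Int.ofNat (m + 3))) (hn : ∀ m : ℕ, P (Int.negSucc m)) : ∀ n : ℤ, P n
  | (0 : ℤ) => h0
  | (1 : ℤ) => h1
  | (2 : ℤ) => h2
  | Int.ofNat (m + 3) => ho m
  | Int.negSucc m => hn m

/-- Build a cochain complex of finitely generated free abelian groups from a rank function
`r : ℤ → ℕ` and degreewise differentials. -/
noncomputable def mkC (r : ℤ → ℕ) (d : ∀ n : ℤ, V (r n) ⟶ V (r (n + 1)))
    (w : ∀ n, d n ≫ d (n + 1) = 0) : CochainComplex (ModuleCat ℤ) ℤ where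
  X n := V (r n)
  d i j := if h : i + 1 = j then d i ≫ eqToHom (congrArg (fun t => V (r t)) h) else 0
  shape _ _ h := dif_neg h
  d_comp_d' i j k hij hjk := by
    obtain rfl : j = i + 1 := hij.symm
    obtain rfl : k = (i + 1) + 1 := hjk.symm
    simp only [dif_pos rfl, eqToHom_refl, Category.comp_id]
    exact w i

lemma mkC_d (r : ℤ → ℕ) (d : ∀ n : ℤ, V (r n) ⟶ V (r (n + 1)))
    (w : ∀ n, d n ≫ d (n + 1) = 0) (n : ℤ) : (mkC r d w).d n (n + 1) = d n := by
  show (if h : n + 1 = n + 1 then d n ≫ eqToHom (congrArg (fun t => V (r t)) h) else 0) = d n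
  rw [dif_pos rfl, eqToHom_refl, Category.comp_id]

/-- Build a morphism of complexes from degreewise data. -/
noncomputable def mkHom {r s : ℤ → ℕ} {dX : ∀ n : ℤ, V (r n) ⟶ V (r (n + 1))}
    {dY : ∀ n : ℤ, V (s n) ⟶ V (s (n + 1))} {wX wY}
    (f : ∀ n : ℤ, V (r n) ⟶ V (s n))
    (comm : ∀ n : ℤ, dX n ≫ f (n + 1) = f n ≫ dY n) : mkC r dX wX ⟶ mkC s dY wY where
  f n := f n
  comm' i j hij := by
    obtain rfl : j = i + 1 := hij.symm
    show f i ≫ (mkC s dY wY).d i (i + 1) = (mkC r dX wX).d i (i + 1) ≫ f (i + 1)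
    rw [mkC_d, mkC_d]
    exact (comm i).symm

/-- Build a morphism from a complex to the shift by `1` of another complex, from
degreewise data. -/
noncomputable def mkHomShift {r s : ℤ → ℕ} {dX : ∀ n : ℤ, V (r n) ⟶ V (r (n + 1))}
    {dY : ∀ n : ℤ, V (s n) ⟶ V (s (n + 1))} {wX wY}
    (f : ∀ n : ℤ, V (r n) ⟶ V (s (n + 1)))
    (comm : ∀ n : ℤ, dX n ≫ f (n + 1) + f n ≫ dY (n + 1) = 0) :
    mkC r dX wX ⟶ (mkC s dY wY)⟦(1 : ℤ)⟧ where
  f n := (f n : V (r n) ⟶ V (s (n + 1)))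
  comm' i j hij := by
    obtain rfl : j = i + 1 := hij.symm
    have h1 : ((mkC s dY wY)⟦(1 : ℤ)⟧).d i (i + 1) = -(dY (i + 1)) := by
      rw [CochainComplex.shiftFunctor_obj_d', mkC_d]
      simp [Units.smul_def]
      exact neg_one_smul ℤ _
    show f i ≫ ((mkC s dY wY)⟦(1 : ℤ)⟧).d i (i + 1) = (mkC r dX wX).d i (i + 1) ≫ f (i + 1)
    rw [h1, mkC_d]
    have h2 := comm i
    rw [add_eq_zero_iff_eq_neg] at h2
    erw [Preadditive.comp_neg]
    exact h2.symm

/-- Ranks of a complex concentrated in degrees `0`, `1`, `2`. -/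
def rk3 (r₀ r₁ r₂ : ℕ) : ℤ → ℕ
  | 0 => r₀
  | 1 => r₁
  | 2 => r₂
  | _ => 0

/-- Differentials of a complex concentrated in degrees `0`, `1`, `2`. -/
noncomputable def d3 (r₀ r₁ r₂ : ℕ) (D₀ : Matrix (Fin r₁) (Fin r₀) ℤ)
    (D₁ : Matrix (Fin r₂) (Fin r₁) ℤ) :
    ∀ n : ℤ, V (rk3 r₀ r₁ r₂ n) ⟶ V (rk3 r₀ r₁ r₂ (n + 1))
  | 0 => mt D₀
  | 1 => mt D₁
  | _ => 0

/-- The bounded complex of finitely generated free abelian groups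
`ℤ^{r₀} → ℤ^{r₁} → ℤ^{r₂}` concentrated in degrees `0`, `1`, `2`, with differentials the
matrices `D₀` and `D₁`. -/
noncomputable def mk3 (r₀ r₁ r₂ : ℕ) (D₀ : Matrix (Fin r₁) (Fin r₀) ℤ)
    (D₁ : Matrix (Fin r₂) (Fin r₁) ℤ) (w : D₁ * D₀ = 0) :
    CochainComplex (ModuleCat ℤ) ℤ :=
  mkC (rk3 r₀ r₁ r₂) (d3 r₀ r₁ r₂ D₀ D₁) (by
    refine int_cases3 ?_ ?_ ?_ (fun m => ?_) (fun m => ?_)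
    · show mt D₀ ≫ mt D₁ = 0
      rw [mt_comp, w, mt_zero]
    · exact homs_eq_of_tgt rfl _ _
    · exact homs_eq_of_tgt rfl _ _
    · exact homs_eq_of_src rfl _ _
    · exact homs_eq_of_src rfl _ _)

/-- Degreewise components, given by matrices, of a morphism between complexes concentrated
in degrees `0`, `1`, `2`. -/
noncomputable def f3 {r₀ r₁ r₂ : ℕ} (s₀ s₁ s₂ : ℕ) (F₀ : Matrix (Fin s₀) (Fin r₀) ℤ)
    (F₁ : Matrix (Fin s₁) (Fin r₁) ℤ) (F₂ : Matrix (Fin s₂) (Fin r₂) ℤ) :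
    ∀ n : ℤ, V (rk3 r₀ r₁ r₂ n) ⟶ V (rk3 s₀ s₁ s₂ n)
  | 0 => mt F₀
  | 1 => mt F₁
  | 2 => mt F₂
  | Int.ofNat (_ + 3) => 0
  | Int.negSucc _ => 0

/-- A morphism between complexes concentrated in degrees `0`, `1`, `2`, given by matrices
`F₀`, `F₁`, `F₂` commuting with the differentials. -/
noncomputable def mkHom3 {r₀ r₁ r₂ : ℕ} {D₀ : Matrix (Fin r₁) (Fin r₀) ℤ}
    {D₁ : Matrix (Fin r₂) (Fin r₁) ℤ} {wD}
    {s₀ s₁ s₂ : ℕ} {E₀ : Matrix (Fin s₁) (Fin s₀) ℤ} {E₁ : Matrix (Fin s₂) (Fin s₁) ℤ} {wE}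
    (F₀ : Matrix (Fin s₀) (Fin r₀) ℤ) (F₁ : Matrix (Fin s₁) (Fin r₁) ℤ)
    (F₂ : Matrix (Fin s₂) (Fin r₂) ℤ)
    (c₀ : F₁ * D₀ = E₀ * F₀) (c₁ : F₂ * D₁ = E₁ * F₁) :
    mk3 r₀ r₁ r₂ D₀ D₁ wD ⟶ mk3 s₀ s₁ s₂ E₀ E₁ wE :=
  mkHom (f3 s₀ s₁ s₂ F₀ F₁ F₂) (by
    refine int_cases3 ?_ ?_ ?_ (fun m => ?_) (fun m => ?_)
    · show mt D₀ ≫ mt F₁ = mt F₀ ≫ mt E₀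
      rw [mt_comp, mt_comp, c₀]
    · show mt D₁ ≫ mt F₂ = mt F₁ ≫ mt E₁
      rw [mt_comp, mt_comp, c₁]
    · exact homs_eq_of_tgt rfl _ _
    · exact homs_eq_of_src rfl _ _
    · exact homs_eq_of_src rfl _ _)

/-- Degreewise components, given by matrices, of a morphism from a complex concentrated in
degrees `0`, `1`, `2` to the shift by one of another such complex. -/
noncomputable def fs3 {r₀ r₁ r₂ : ℕ} (s₀ s₁ s₂ : ℕ) (G₀ : Matrix (Fin s₁) (Fin r₀) ℤ)
    (G₁ : Matrix (Fin s₂) (Fin r₁) ℤ) :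
    ∀ n : ℤ, V (rk3 r₀ r₁ r₂ n) ⟶ V (rk3 s₀ s₁ s₂ (n + 1))
  | 0 => mt G₀
  | 1 => mt G₁
  | 2 => 0
  | Int.ofNat (_ + 3) => 0
  | Int.negSucc _ => 0

/-- A morphism from a complex concentrated in degrees `0`, `1`, `2` to the shift by one of
another such complex, given by matrices `G₀`, `G₁` anticommuting with the differentials. -/
noncomputable def mkHomShift3 {r₀ r₁ r₂ : ℕ} {D₀ : Matrix (Fin r₁) (Fin r₀) ℤ}
    {D₁ : Matrix (Fin r₂) (Fin r₁) ℤ} {wD}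
    {s₀ s₁ s₂ : ℕ} {E₀ : Matrix (Fin s₁) (Fin s₀) ℤ} {E₁ : Matrix (Fin s₂) (Fin s₁) ℤ} {wE}
    (G₀ : Matrix (Fin s₁) (Fin r₀) ℤ) (G₁ : Matrix (Fin s₂) (Fin r₁) ℤ)
    (c₀ : G₁ * D₀ + E₁ * G₀ = 0) :
    mk3 r₀ r₁ r₂ D₀ D₁ wD ⟶ (mk3 s₀ s₁ s₂ E₀ E₁ wE)⟦(1 : ℤ)⟧ :=
  mkHomShift (fs3 s₀ s₁ s₂ G₀ G₁) (by
    refine int_cases3 ?_ ?_ ?_ (fun m => ?_) (fun m => ?_)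
    · show mt D₀ ≫ mt G₁ + mt G₀ ≫ mt E₁ = 0
      rw [mt_comp, mt_comp, ← mt_add, c₀, mt_zero]
    · exact homs_eq_of_tgt rfl _ _
    · exact homs_eq_of_tgt rfl _ _
    · exact homs_eq_of_src rfl _ _
    · exact homs_eq_of_src rfl _ _)


/-! ### The square of Section 3 -/

/-- The quotient functor onto the homotopy category of cochain complexes. -/
noncomputable abbrev Q :
    CochainComplex (ModuleCat ℤ) ℤ ⥤ HomotopyCategory (ModuleCat ℤ) (ComplexShape.up ℤ) :=
  HomotopyCategory.quotient _ _

/-- The complex `ℤ → ℤ²` concentrated in degrees `0` and `1`, with differential the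
column `(-a³, a²)`. -/
noncomputable def Bc (a : ℤ) : CochainComplex (ModuleCat ℤ) ℤ :=
  mk3 1 2 0 !![-a ^ 3; a ^ 2] 0 (mat_eq_of_rows0 _ _)

/-- The complex `ℤ → ℤ` concentrated in degrees `0` and `1`, with differential `a²`. -/
noncomputable def Bc' (a : ℤ) : CochainComplex (ModuleCat ℤ) ℤ :=
  mk3 1 1 0 !![a ^ 2] 0 (mat_eq_of_rows0 _ _)

/-- The complex `ℤ → ℤ` concentrated in degrees `0` and `1`, with differential `a²`. -/
noncomputable def Cc (a : ℤ) : CochainComplex (ModuleCat ℤ) ℤ :=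
  mk3 1 1 0 !![a ^ 2] 0 (mat_eq_of_rows0 _ _)

/-- The complex `ℤ` concentrated in degree `0`. -/
noncomputable def Cc' : CochainComplex (ModuleCat ℤ) ℤ :=
  mk3 1 0 0 0 0 (mat_eq_of_rows0 _ _)

/-- The chain map `g : B ⟶ C` with degree-0 component `a` and degree-1 component the
row `(-1, 0)`. -/
noncomputable def gm (a : ℤ) : Bc a ⟶ Cc a :=
  mkHom3 !![a] !![-1, 0] 0
    (by ext i j; fin_cases i <;> fin_cases j <;>
      simp [Matrix.mul_apply, Fin.sum_univ_succ] <;> ring)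
    (mat_eq_of_rows0 _ _)

/-- The chain map `b : B ⟶ B'` with degree-0 component `1` and degree-1 component the
row `(0, 1)`. -/
noncomputable def bm (a : ℤ) : Bc a ⟶ Bc' a :=
  mkHom3 !![1] !![0, 1] 0
    (by ext i j; fin_cases i <;> fin_cases j <;>
      simp [Matrix.mul_apply, Fin.sum_univ_succ] <;> ring)
    (mat_eq_of_rows0 _ _)

/-- The chain map `g' : B' ⟶ C'` with degree-0 component `a`. -/
noncomputable def gm' (a : ℤ) : Bc' a ⟶ Cc' :=
  mkHom3 !![a] 0 0 (mat_eq_of_rows0 _ _) (mat_eq_of_rows0 _ _)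

/-- The chain map `c : C ⟶ C'` with degree-0 component `1 + a`. -/
noncomputable def cm (a : ℤ) : Cc a ⟶ Cc' :=
  mkHom3 !![1 + a] 0 0 (mat_eq_of_rows0 _ _) (mat_eq_of_rows0 _ _)

end KbFree

namespace KbFree

open HomologicalComplex

lemma mt_eq {k l : ℕ} (f : V k ⟶ V l) : mt (LinearMap.toMatrix' f.hom) = f := by
  ext1; exact Matrix.toLin'_toMatrix' f.hom

lemma mt_inj {k l : ℕ} {A B : Matrix (Fin l) (Fin k) ℤ} (h : mt A = mt B) : A = B := by
  have hA : LinearMap.toMatrix' (mt A).hom = A := LinearMap.toMatrix'_toLin' A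
  have hB : LinearMap.toMatrix' (mt B).hom = B := LinearMap.toMatrix'_toLin' B
  rw [← hA, ← hB, h]

lemma one_fin_one : (!![1] : Matrix (Fin 1) (Fin 1) ℤ) = 1 := by
  ext i j; fin_cases i; fin_cases j; simp

lemma mt_one {k : ℕ} : mt (1 : Matrix (Fin k) (Fin k) ℤ) = 𝟙 (V k) := by
  ext1; rw [ModuleCat.hom_id]; exact Matrix.mulVecLin_one

lemma mt_one' : mt (!![1] : Matrix (Fin 1) (Fin 1) ℤ) = 𝟙 (V 1) := by
  rw [one_fin_one, mt_one]

lemma isZero_V0 : Limits.IsZero (V 0) :=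
  ModuleCat.isZero_of_subsingleton _

lemma homs_eq_src0 {k : ℕ} (hk : k = 0) {M : ModuleCat ℤ} (f g : V k ⟶ M) : f = g := by
  subst hk
  exact isZero_V0.eq_of_src f g

lemma mk3_d01 {r₀ r₁ r₂ : ℕ} (D₀ : Matrix (Fin r₁) (Fin r₀) ℤ)
    (D₁ : Matrix (Fin r₂) (Fin r₁) ℤ) (w : D₁ * D₀ = 0) :
    (mk3 r₀ r₁ r₂ D₀ D₁ w).d 0 1 = mt D₀ :=
  mkC_d (rk3 r₀ r₁ r₂) (d3 r₀ r₁ r₂ D₀ D₁) _ 0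

/-- Retyping helper. -/
def asV {k l : ℕ} (f : V k ⟶ V l) : V k ⟶ V l := f

lemma tm_mt {k l : ℕ} (A : Matrix (Fin l) (Fin k) ℤ) :
    LinearMap.toMatrix' (mt A : V k ⟶ V l).hom = A :=
  LinearMap.toMatrix'_toLin' A

/-- Extract, from a homotopy between two morphisms of `mk3`-complexes, the degree-0
relation, stated at the level of matrices. -/
lemma homotopy_extract {r₀ r₁ r₂ : ℕ} {D₀ : Matrix (Fin r₁) (Fin r₀) ℤ}
    {D₁ : Matrix (Fin r₂) (Fin r₁) ℤ} {wD}
    {s₀ s₁ s₂ : ℕ} {E₀ : Matrix (Fin s₁) (Fin s₀) ℤ} {E₁ : Matrix (Fin s₂) (Fin s₁) ℤ} {wE}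
    {f g : mk3 r₀ r₁ r₂ D₀ D₁ wD ⟶ mk3 s₀ s₁ s₂ E₀ E₁ wE}
    (h : Homotopy f g) :
    ∃ H : Matrix (Fin s₀) (Fin r₁) ℤ,
      LinearMap.toMatrix' (asV (k := r₀) (l := s₀) (f.f 0)).hom =
        H * D₀ + LinearMap.toMatrix' (asV (k := r₀) (l := s₀) (g.f 0)).hom := by
  have hc := h.comm 0
  rw [dNext_eq h.hom (show (ComplexShape.up ℤ).Rel 0 1 by simp),
    prevD_eq h.hom (show (ComplexShape.up ℤ).Rel (-1) 0 by simp),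
    show h.hom 0 (-1) = 0 from homs_eq_of_tgt rfl _ _,
    Limits.zero_comp, add_zero, mk3_d01] at hc
  refine ⟨LinearMap.toMatrix' (asV (k := r₁) (l := s₀) (h.hom 1 0)).hom, ?_⟩
  have e : (asV (k := r₀) (l := s₀) (f.f 0)).hom =
      (asV (k := r₁) (l := s₀) (h.hom 1 0)).hom.comp (mt D₀).hom +
        (asV (k := r₀) (l := s₀) (g.f 0)).hom := by
    unfold asV; rw [hc]; rfl
  rw [e, map_add, LinearMap.toMatrix'_comp, tm_mt]

end KbFree

namespace KbFree

/-- The homotopy witnessing commutativity of the square. -/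
noncomputable def sqHom (a : ℤ) : ∀ i j : ℤ, (Bc a).X i ⟶ Cc'.X j := fun i j =>
  if h : i = 1 ∧ j = 0 then
    eqToHom (congrArg (Bc a).X h.1) ≫ (mt !![0,1] : V 2 ⟶ V 1) ≫
      eqToHom (congrArg Cc'.X h.2).symm
  else 0

noncomputable def sqHomotopy (a : ℤ) : Homotopy (gm a ≫ cm a) (bm a ≫ gm' a) where
  hom := sqHom a
  zero i j hij := by
    rw [sqHom, dif_neg]
    rintro ⟨rfl, rfl⟩
    exact hij (by simp)
  comm := by
    refine int_cases3 ?_ ?_ ?_ (fun m => ?_) (fun m => ?_)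
    · rw [dNext_eq (sqHom a) (show (ComplexShape.up ℤ).Rel 0 1 by simp),
        prevD_eq (sqHom a) (show (ComplexShape.up ℤ).Rel (-1) 0 by simp),
        show sqHom a 0 (-1) = 0 from dif_neg (by simp), Limits.zero_comp, add_zero,
        show sqHom a 1 0 = (mt !![0,1] : V 2 ⟶ V 1) from by
          rw [sqHom]; rw [dif_pos ⟨rfl, rfl⟩]; simp; exact Category.comp_id _,
        show (Bc a).d 0 1 = mt !![-a^3; a^2] from mk3_d01 _ _ _]
      show mt !![a] ≫ mt !![1+a] = mt !![-a^3; a^2] ≫ mt !![0,1] + mt !![1] ≫ mt !![a]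
      rw [mt_comp, mt_comp, mt_comp, ← mt_add]
      congr 1
      ext i j
      fin_cases i
      fin_cases j
      simp [Matrix.mul_apply, Fin.sum_univ_succ]
      ring
    · exact homs_eq_of_tgt rfl _ _
    · exact homs_eq_of_tgt rfl _ _
    · exact homs_eq_of_tgt rfl _ _
    · exact homs_eq_of_tgt rfl _ _

lemma square_commutes (a : ℤ) :
    Q.map (gm a) ≫ Q.map (cm a) = Q.map (bm a) ≫ Q.map (gm' a) := by
  rw [← Functor.map_comp, ← Functor.map_comp]
  exact HomotopyCategory.eq_of_homotopy _ _ (sqHomotopy a)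

end KbFree

namespace KbFree

open Limits HomologicalComplex

/-- The direct sum complex `B' ⊕ C` realized concretely: `ℤ² → ℤ²` in degrees 0,1 with
differential `diag (a², a²)`. -/
noncomputable def Dc (a : ℤ) : CochainComplex (ModuleCat ℤ) ℤ :=
  mk3 2 2 0 !![a^2, 0; 0, a^2] 0 (mat_eq_of_rows0 _ _)

/-- The map `(b, g) : B ⟶ B' ⊕ C`. -/
noncomputable def u0 (a : ℤ) : Bc a ⟶ Dc a :=
  mkHom3 !![1; a] !![0, 1; -1, 0] 0
    (by ext i j; fin_cases i <;> fin_cases j <;>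
      (simp [Matrix.mul_apply, Fin.sum_univ_succ]; try ring))
    (mat_eq_of_rows0 _ _)

/-- The projection `B' ⊕ C ⟶ C'` with degree-0 component the row `(-a, 1)`. -/
noncomputable def v0 (a : ℤ) : Dc a ⟶ Cc' :=
  mkHom3 !![-a, 1] 0 0 (mat_eq_of_rows0 _ _) (mat_eq_of_rows0 _ _)

/-- First projection `Dc ⟶ B'`. -/
noncomputable def q1 (a : ℤ) : Dc a ⟶ Bc' a :=
  mkHom3 !![1, 0] !![1, 0] 0
    (by ext i j; fin_cases i <;> fin_cases j <;>
      (simp [Matrix.mul_apply, Fin.sum_univ_succ]; try ring))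
    (mat_eq_of_rows0 _ _)

/-- Second projection `Dc ⟶ C`. -/
noncomputable def q2 (a : ℤ) : Dc a ⟶ Cc a :=
  mkHom3 !![0, 1] !![0, 1] 0
    (by ext i j; fin_cases i <;> fin_cases j <;>
      (simp [Matrix.mul_apply, Fin.sum_univ_succ]; try ring))
    (mat_eq_of_rows0 _ _)

/-- First inclusion `B' ⟶ Dc`. -/
noncomputable def j1 (a : ℤ) : Bc' a ⟶ Dc a :=
  mkHom3 !![1; 0] !![1; 0] 0
    (by ext i j; fin_cases i <;> fin_cases j <;>
      (simp [Matrix.mul_apply, Fin.sum_univ_succ]; try ring))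
    (mat_eq_of_rows0 _ _)

/-- Second inclusion `C ⟶ Dc`. -/
noncomputable def j2 (a : ℤ) : Cc a ⟶ Dc a :=
  mkHom3 !![0; 1] !![0; 1] 0
    (by ext i j; fin_cases i <;> fin_cases j <;>
      (simp [Matrix.mul_apply, Fin.sum_univ_succ]; try ring))
    (mat_eq_of_rows0 _ _)

lemma u0_v0 (a : ℤ) : u0 a ≫ v0 a = 0 := by
  apply HomologicalComplex.hom_ext
  intro n
  refine int_cases3 (P := fun n => ((u0 a ≫ v0 a).f n = (0 : Bc a ⟶ Cc').f n)) ?_ ?_ ?_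
    (fun m => ?_) (fun m => ?_) n
  · show mt !![1; a] ≫ mt !![-a, 1] = 0
    rw [mt_comp, show !![-a, 1] * !![1; a] = 0 by
      ext i j; fin_cases i; fin_cases j; simp [Matrix.mul_apply, Fin.sum_univ_succ], mt_zero]
  · exact homs_eq_of_tgt rfl _ _
  · exact homs_eq_of_tgt rfl _ _
  · exact homs_eq_of_tgt rfl _ _
  · exact homs_eq_of_tgt rfl _ _

/-- The degreewise split short exact sequence `B → B' ⊕ C → C'`. -/
noncomputable def Sc (a : ℤ) : ShortComplex (CochainComplex (ModuleCat ℤ) ℤ) :=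
  ShortComplex.mk (u0 a) (v0 a) (u0_v0 a)

noncomputable def σ3 (a : ℤ) :
    ∀ n : ℤ, ((Sc a).map (HomologicalComplex.eval (ModuleCat ℤ)
      (ComplexShape.up ℤ) n)).Splitting
  | 0 =>
    { r := (mt !![1, 0] : V 2 ⟶ V 1)
      s := (mt !![0; 1] : V 1 ⟶ V 2)
      f_r := by
        show mt !![(1:ℤ); a] ≫ mt !![1, 0] = 𝟙 (V 1)
        rw [mt_comp, show !![(1:ℤ), 0] * !![(1:ℤ); a] = 1 by
          ext i j; fin_cases i; fin_cases j; simp [Matrix.mul_apply, Fin.sum_univ_succ], mt_one]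
      s_g := by
        show mt !![(0:ℤ); 1] ≫ mt !![-a, 1] = 𝟙 (V 1)
        rw [mt_comp, show !![-a, (1:ℤ)] * !![(0:ℤ); 1] = 1 by
          ext i j; fin_cases i; fin_cases j; simp [Matrix.mul_apply, Fin.sum_univ_succ], mt_one]
      id := by
        show mt !![(1:ℤ), 0] ≫ mt !![(1:ℤ); a] + mt !![-a, (1:ℤ)] ≫ mt !![(0:ℤ); 1] = 𝟙 (V 2)
        rw [mt_comp, mt_comp, ← mt_add, show !![(1:ℤ); a] * !![(1:ℤ), 0] + !![(0:ℤ); 1] * !![-a, (1:ℤ)]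
            = 1 by
          ext i j; fin_cases i <;> fin_cases j <;>
            (simp [Matrix.mul_apply, Fin.sum_univ_succ]; try ring), mt_one] }
  | 1 =>
    { r := (mt !![0, -1; 1, 0] : V 2 ⟶ V 2)
      s := (0 : V 0 ⟶ V 2)
      f_r := by
        show mt !![(0:ℤ), 1; -1, 0] ≫ mt !![0, -1; 1, 0] = 𝟙 (V 2)
        rw [mt_comp, show !![(0:ℤ), -1; 1, 0] * !![0, 1; -1, 0] = 1 by
          ext i j; fin_cases i <;> fin_cases j <;>
            simp [Matrix.mul_apply, Fin.sum_univ_succ], mt_one]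
      s_g := homs_eq_of_src rfl _ _
      id := by
        erw [Limits.comp_zero, add_zero]
        show mt !![(0:ℤ), -1; 1, 0] ≫ mt !![0, 1; -1, 0] = 𝟙 (V 2)
        rw [mt_comp, show !![(0:ℤ), 1; -1, 0] * !![0, -1; 1, 0] = 1 by
          ext i j; fin_cases i <;> fin_cases j <;>
            simp [Matrix.mul_apply, Fin.sum_univ_succ], mt_one] }
  | 2 =>
    { r := 0
      s := 0
      f_r := homs_eq_of_tgt rfl _ _
      s_g := homs_eq_of_tgt rfl _ _
      id := homs_eq_of_tgt rfl _ _ }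
  | Int.ofNat (m+3) =>
    { r := 0
      s := 0
      f_r := homs_eq_of_tgt rfl _ _
      s_g := homs_eq_of_tgt rfl _ _
      id := homs_eq_of_tgt rfl _ _ }
  | Int.negSucc m =>
    { r := 0
      s := 0
      f_r := homs_eq_of_tgt rfl _ _
      s_g := homs_eq_of_tgt rfl _ _
      id := homs_eq_of_tgt rfl _ _ }

end KbFree

namespace KbFree

open Limits HomologicalComplex

lemma mt_neg {k l : ℕ} (A : Matrix (Fin l) (Fin k) ℤ) : mt (-A) = - mt A := by
  have := mt_add A (-A)
  rw [add_neg_cancel, mt_zero] at this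
  rw [eq_neg_iff_add_eq_zero, add_comm]; exact this.symm

lemma homs_eq_tgt0 {l : ℕ} (hl : l = 0) {M : ModuleCat ℤ} (f g : M ⟶ V l) : f = g := by
  subst hl
  exact isZero_V0.eq_of_tgt f g

lemma hom3_ext {r₀ r₁ r₂ : ℕ} {D₀ : Matrix (Fin r₁) (Fin r₀) ℤ}
    {D₁ : Matrix (Fin r₂) (Fin r₁) ℤ} {wD}
    {X : CochainComplex (ModuleCat ℤ) ℤ}
    (f g : X ⟶ mk3 r₀ r₁ r₂ D₀ D₁ wD)
    (h0 : f.f 0 = g.f 0) (h1 : f.f 1 = g.f 1) (h2 : f.f 2 = g.f 2) : f = g := by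
  apply HomologicalComplex.hom_ext
  intro n
  refine int_cases3 (P := fun n => f.f n = g.f n) h0 h1 h2 (fun m => ?_) (fun m => ?_) n
  · exact homs_eq_tgt0 rfl _ _
  · exact homs_eq_tgt0 rfl _ _

lemma htot (a : ℤ) : q1 a ≫ j1 a + q2 a ≫ j2 a = 𝟙 (Dc a) := by
  refine hom3_ext _ _ ?_ ?_ ?_
  · show mt !![(1:ℤ), 0] ≫ mt !![(1:ℤ); 0] + mt !![(0:ℤ), 1] ≫ mt !![(0:ℤ); 1] = 𝟙 (V 2)
    rw [mt_comp, mt_comp, ← mt_add, show !![(1:ℤ); 0] * !![(1:ℤ), 0] +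
        !![(0:ℤ); 1] * !![(0:ℤ), 1] = 1 by
      ext i j; fin_cases i <;> fin_cases j <;> simp [Matrix.mul_apply, Fin.sum_univ_succ], mt_one]
  · show mt !![(1:ℤ), 0] ≫ mt !![(1:ℤ); 0] + mt !![(0:ℤ), 1] ≫ mt !![(0:ℤ); 1] = 𝟙 (V 2)
    rw [mt_comp, mt_comp, ← mt_add, show !![(1:ℤ); 0] * !![(1:ℤ), 0] +
        !![(0:ℤ); 1] * !![(0:ℤ), 1] = 1 by
      ext i j; fin_cases i <;> fin_cases j <;> simp [Matrix.mul_apply, Fin.sum_univ_succ], mt_one]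
  · exact homs_eq_of_tgt rfl _ _

lemma hj1q1 (a : ℤ) : j1 a ≫ q1 a = 𝟙 (Bc' a) := by
  refine hom3_ext _ _ ?_ ?_ (homs_eq_of_tgt rfl _ _)
  · show mt !![(1:ℤ); 0] ≫ mt !![(1:ℤ), 0] = 𝟙 (V 1)
    rw [mt_comp, show !![(1:ℤ), 0] * !![(1:ℤ); 0] = 1 by
      ext i j; fin_cases i; fin_cases j; simp [Matrix.mul_apply, Fin.sum_univ_succ], mt_one]
  · show mt !![(1:ℤ); 0] ≫ mt !![(1:ℤ), 0] = 𝟙 (V 1)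
    rw [mt_comp, show !![(1:ℤ), 0] * !![(1:ℤ); 0] = 1 by
      ext i j; fin_cases i; fin_cases j; simp [Matrix.mul_apply, Fin.sum_univ_succ], mt_one]

lemma hj1q2 (a : ℤ) : j1 a ≫ q2 a = 0 := by
  refine hom3_ext _ _ ?_ ?_ (homs_eq_of_tgt rfl _ _)
  · show mt !![(1:ℤ); 0] ≫ mt !![(0:ℤ), 1] = 0
    rw [mt_comp, show !![(0:ℤ), 1] * !![(1:ℤ); 0] = 0 by
      ext i j; fin_cases i; fin_cases j; simp [Matrix.mul_apply, Fin.sum_univ_succ], mt_zero]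
  · show mt !![(1:ℤ); 0] ≫ mt !![(0:ℤ), 1] = 0
    rw [mt_comp, show !![(0:ℤ), 1] * !![(1:ℤ); 0] = 0 by
      ext i j; fin_cases i; fin_cases j; simp [Matrix.mul_apply, Fin.sum_univ_succ], mt_zero]

lemma hj2q1 (a : ℤ) : j2 a ≫ q1 a = 0 := by
  refine hom3_ext _ _ ?_ ?_ (homs_eq_of_tgt rfl _ _)
  · show mt !![(0:ℤ); 1] ≫ mt !![(1:ℤ), 0] = 0
    rw [mt_comp, show !![(1:ℤ), 0] * !![(0:ℤ); 1] = 0 by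
      ext i j; fin_cases i; fin_cases j; simp [Matrix.mul_apply, Fin.sum_univ_succ], mt_zero]
  · show mt !![(0:ℤ); 1] ≫ mt !![(1:ℤ), 0] = 0
    rw [mt_comp, show !![(1:ℤ), 0] * !![(0:ℤ); 1] = 0 by
      ext i j; fin_cases i; fin_cases j; simp [Matrix.mul_apply, Fin.sum_univ_succ], mt_zero]

lemma hj2q2 (a : ℤ) : j2 a ≫ q2 a = 𝟙 (Cc a) := by
  refine hom3_ext _ _ ?_ ?_ (homs_eq_of_tgt rfl _ _)
  · show mt !![(0:ℤ); 1] ≫ mt !![(0:ℤ), 1] = 𝟙 (V 1)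
    rw [mt_comp, show !![(0:ℤ), 1] * !![(0:ℤ); 1] = 1 by
      ext i j; fin_cases i; fin_cases j; simp [Matrix.mul_apply, Fin.sum_univ_succ], mt_one]
  · show mt !![(0:ℤ); 1] ≫ mt !![(0:ℤ), 1] = 𝟙 (V 1)
    rw [mt_comp, show !![(0:ℤ), 1] * !![(0:ℤ); 1] = 1 by
      ext i j; fin_cases i; fin_cases j; simp [Matrix.mul_apply, Fin.sum_univ_succ], mt_one]

lemma hu0q1 (a : ℤ) : u0 a ≫ q1 a = bm a := by
  refine hom3_ext _ _ ?_ ?_ (homs_eq_of_tgt rfl _ _)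
  · show mt !![(1:ℤ); a] ≫ mt !![(1:ℤ), 0] = mt !![(1:ℤ)]
    rw [mt_comp, show !![(1:ℤ), 0] * !![(1:ℤ); a] = !![(1:ℤ)] by
      ext i j; fin_cases i; fin_cases j; simp [Matrix.mul_apply, Fin.sum_univ_succ]]
  · show mt !![(0:ℤ), 1; -1, 0] ≫ mt !![(1:ℤ), 0] = mt !![(0:ℤ), 1]
    rw [mt_comp, show !![(1:ℤ), 0] * !![(0:ℤ), 1; -1, 0] = !![(0:ℤ), 1] by
      ext i j; fin_cases i <;> fin_cases j <;> simp [Matrix.mul_apply, Fin.sum_univ_succ]]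

lemma hu0q2 (a : ℤ) : u0 a ≫ q2 a = gm a := by
  refine hom3_ext _ _ ?_ ?_ (homs_eq_of_tgt rfl _ _)
  · show mt !![(1:ℤ); a] ≫ mt !![(0:ℤ), 1] = mt !![a]
    rw [mt_comp, show !![(0:ℤ), 1] * !![(1:ℤ); a] = !![a] by
      ext i j; fin_cases i; fin_cases j; simp [Matrix.mul_apply, Fin.sum_univ_succ]]
  · show mt !![(0:ℤ), 1; -1, 0] ≫ mt !![(0:ℤ), 1] = mt !![(-1:ℤ), 0]
    rw [mt_comp, show !![(0:ℤ), 1] * !![(0:ℤ), 1; -1, 0] = !![(-1:ℤ), 0] by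
      ext i j; fin_cases i <;> fin_cases j <;> simp [Matrix.mul_apply, Fin.sum_univ_succ]]

lemma int_no_unit {a H c : ℤ} (ha : 3 ≤ a) (h0 : 0 < c) (hc : c < a^2)
    (he : H * a^2 = c) : False := by
  rcases le_or_gt H 0 with h | h
  · have : H * a^2 ≤ 0 := mul_nonpos_of_nonpos_of_nonneg h (by positivity)
    linarith
  · have h1 : (1:ℤ) ≤ H := h
    have : a^2 ≤ H * a^2 := le_mul_of_one_le_left (by positivity) h1
    linarith

end KbFree


set_option maxHeartbeats 1000000 in
open KbFree in
/-- For `a ≥ 3`, in the bounded homotopy category of complexes of finitely generated free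
abelian groups, the square with sides `g, g', b, c` commutes (i.e. `c ∘ g` and `g' ∘ b`
are homotopic), but it is not homotopy cartesian: there is no `δ : C' ⟶ B⟦1⟧` making
`B → B' ⊕ C → C' → B⟦1⟧` (with first map of components `(b, g)` and second map of
components `(g', -c)`) a distinguished triangle. -/
theorem square_commutes_but_not_homotopy_cartesian (a : ℤ) (ha : 3 ≤ a) :
    (Q.map (gm a) ≫ Q.map (cm a) = Q.map (bm a) ≫ Q.map (gm' a)) ∧
    ¬ ∃ δ : Q.obj Cc' ⟶ (Q.obj (Bc a))⟦(1 : ℤ)⟧,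
        Triangle.mk (biprod.lift (Q.map (bm a)) (Q.map (gm a)))
            (biprod.desc (Q.map (gm' a)) (-Q.map (cm a))) δ ∈
          distTriang (HomotopyCategory (ModuleCat ℤ) (ComplexShape.up ℤ)) := by
  constructor
  · exact square_commutes a
  · rintro ⟨δ, hT⟩
    set T : Triangle (HomotopyCategory (ModuleCat ℤ) (ComplexShape.up ℤ)) :=
      Triangle.mk (biprod.lift (Q.map (bm a)) (Q.map (gm a)))
        (biprod.desc (Q.map (gm' a)) (-Q.map (cm a))) δ with hTdef
    have hT₀ : CochainComplex.trianglehOfDegreewiseSplit (Sc a) (σ3 a) ∈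
        distTriang (HomotopyCategory (ModuleCat ℤ) (ComplexShape.up ℤ)) :=
      (HomotopyCategory.distinguished_iff_iso_trianglehOfDegreewiseSplit _).2
        ⟨Sc a, σ3 a, ⟨Iso.refl _⟩⟩
    set μ : Q.obj (Dc a) ⟶ Q.obj (Bc' a) ⊞ Q.obj (Cc a) :=
      biprod.lift (Q.map (q1 a)) (Q.map (q2 a)) with hμdef
    set μ' : Q.obj (Bc' a) ⊞ Q.obj (Cc a) ⟶ Q.obj (Dc a) :=
      biprod.desc (Q.map (j1 a)) (Q.map (j2 a)) with hμ'def
    have hμμ' : μ ≫ μ' = 𝟙 _ := by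
      rw [hμdef, hμ'def, biprod.lift_desc, ← Functor.map_comp, ← Functor.map_comp,
        ← Functor.map_add, htot a, CategoryTheory.Functor.map_id]
    have hμ'μ : μ' ≫ μ = 𝟙 _ := by
      apply biprod.hom_ext' <;> apply biprod.hom_ext <;>
        simp [hμdef, hμ'def, ← Functor.map_comp, hj1q1 a, hj1q2 a, hj2q1 a, hj2q2 a]
    haveI : IsIso μ := ⟨μ', hμμ', hμ'μ⟩
    have hcomm : (CochainComplex.trianglehOfDegreewiseSplit (Sc a) (σ3 a)).mor₁ ≫ μ =
        𝟙 (Q.obj (Bc a)) ≫ T.mor₁ := by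
      erw [Category.id_comp]
      show Q.map (u0 a) ≫ μ = biprod.lift (Q.map (bm a)) (Q.map (gm a))
      apply biprod.hom_ext
      · rw [Category.assoc, hμdef, biprod.lift_fst, biprod.lift_fst, ← Functor.map_comp,
          hu0q1 a]
      · rw [Category.assoc, hμdef, biprod.lift_snd, biprod.lift_snd, ← Functor.map_comp,
          hu0q2 a]
    obtain ⟨φ, hφ₂, hφ₃⟩ := Pretriangulated.complete_distinguished_triangle_morphism
      _ _ hT₀ hT (𝟙 _) μ hcomm
    haveI hφiso : IsIso φ := by
      refine Pretriangulated.isIso₃_of_isIso₁₂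
        (T := CochainComplex.trianglehOfDegreewiseSplit (Sc a) (σ3 a)) (T' := T)
        ⟨𝟙 _, μ, φ, hcomm, hφ₂, hφ₃⟩ hT₀ hT ?_ ?_
      · dsimp only
        exact ⟨𝟙 _, Category.id_comp _, Category.id_comp _⟩
      · dsimp only
        exact ⟨μ', hμμ', hμ'μ⟩
    obtain ⟨ψ, hψ⟩ := Q.map_surjective φ
    obtain ⟨χ, hχ⟩ := Q.map_surjective (@CategoryTheory.inv _ _ _ _ φ hφiso)
    -- first relation : ψ ≫ χ is homotopic to the identity
    have e1 : Q.map (ψ ≫ χ) = Q.map (𝟙 Cc') := by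
      rw [Functor.map_comp, hψ, hχ]
      exact (IsIso.hom_inv_id φ).trans (Q.map_id Cc').symm
    obtain ⟨H1, hH1⟩ := homotopy_extract (HomotopyCategory.homotopyOfEq _ _ e1)
    -- second relation : j2 ≫ v0 ≫ ψ is homotopic to -cm
    have h6 : Q.map (j2 a) ≫ μ = biprod.inr := by
      apply biprod.hom_ext
      · rw [Category.assoc, hμdef, biprod.lift_fst, ← Functor.map_comp, hj2q1 a,
          Functor.map_zero, biprod.inr_fst]
      · rw [Category.assoc, hμdef, biprod.lift_snd, ← Functor.map_comp, hj2q2 a,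
          CategoryTheory.Functor.map_id, biprod.inr_snd]
    have e2 : Q.map (j2 a ≫ v0 a ≫ ψ) = Q.map (-(cm a)) := by
      have h5 : Q.map (v0 a) ≫ φ = μ ≫ T.mor₂ := hφ₂
      erw [Functor.map_comp, Functor.map_comp]
      erw [hψ, h5, ← Category.assoc, h6]
      show biprod.inr ≫ biprod.desc (Q.map (gm' a)) (-Q.map (cm a)) = _
      rw [biprod.inr_desc, Functor.map_neg]
    obtain ⟨H2, hH2⟩ := homotopy_extract (HomotopyCategory.homotopyOfEq _ _ e2)
    -- translate to matrices
    obtain ⟨N, hN⟩ : ∃ N : Matrix (Fin 1) (Fin 1) ℤ,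
        N = LinearMap.toMatrix' (asV (k := 1) (l := 1) (ψ.f 0)).hom := ⟨_, rfl⟩
    obtain ⟨M, hM⟩ : ∃ M : Matrix (Fin 1) (Fin 1) ℤ,
        M = LinearMap.toMatrix' (asV (k := 1) (l := 1) (χ.f 0)).hom := ⟨_, rfl⟩
    -- first relation : M * N = 1
    have c1 : M * N = 1 := by
      have e0 : (asV (k := 1) (l := 1) ((ψ ≫ χ).f 0)).hom =
          (asV (k := 1) (l := 1) (χ.f 0)).hom.comp (asV (k := 1) (l := 1) (ψ.f 0)).hom := rfl
      have e1' : (asV (k := 1) (l := 1) ((𝟙 Cc' : Cc' ⟶ Cc').f 0)).hom = (mt 1).hom :=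
        congrArg ModuleCat.Hom.hom mt_one.symm
      rw [e0, e1', LinearMap.toMatrix'_comp, tm_mt, Matrix.mul_zero, zero_add,
        ← hN, ← hM] at hH1
      exact hH1
    -- second relation
    have c2 : (N * !![-a, (1:ℤ)]) * !![(0:ℤ); 1] = H2 * !![a^2] + -(!![1 + a]) := by
      have e0 : (asV (k := 1) (l := 1) ((j2 a ≫ v0 a ≫ ψ).f 0)).hom =
          ((asV (k := 1) (l := 1) (ψ.f 0)).hom.comp (mt !![-a, (1:ℤ)]).hom).comp
            (mt !![(0:ℤ); 1]).hom := rfl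
      have e1' : (asV (k := 1) (l := 1) ((-(cm a) : Cc a ⟶ Cc').f 0)).hom =
          -(mt !![1 + a] : V 1 ⟶ V 1).hom := rfl
      rw [e0, e1', LinearMap.toMatrix'_comp, LinearMap.toMatrix'_comp, tm_mt, tm_mt,
        map_neg, tm_mt, ← hN] at hH2
      exact hH2
    -- extract the integer entries
    have c1' : M 0 0 * N 0 0 = 1 := by
      have h00 := congrArg (fun (X : Matrix (Fin 1) (Fin 1) ℤ) => X 0 0) c1
      simpa [Matrix.mul_apply] using h00
    have c2' : N 0 0 = H2 0 0 * a ^ 2 - (1 + a) := by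
      have h00 := congrArg (fun (X : Matrix (Fin 1) (Fin 1) ℤ) => X 0 0) c2
      simp [Matrix.mul_apply, Fin.sum_univ_succ] at h00
      linarith
    -- the contradiction
    have hunit : N 0 0 = 1 ∨ N 0 0 = -1 :=
      Int.isUnit_iff.mp (IsUnit.of_mul_eq_one _ (by rw [mul_comm]; exact c1'))
    rcases hunit with h | h
    · refine int_no_unit (a := a) (H := H2 0 0) (c := a + 2) ha (by linarith) (by nlinarith) ?_
      rw [h] at c2'; linarith
    · refine int_no_unit (a := a) (H := H2 0 0) (c := a) ha (by linarith) (by nlinarith) ?_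
      rw [h] at c2'; linarith
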